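/- With type-B classes (classes on n - c of the first n - 1 facilities, none containing facilities n or n+1) and total measure ξ distributed uniformly: after round B each exclusive client of facility i ≤ n-1 is assigned to i with fraction ξ(n-c)/(n-1), and is assigned to each other facility i' ≤ n-1, i' ≠ i with fraction ξ(n-c)/((n-1)(n-2)(n^2-1)). -/

import Mathlib

open Finset

private lemma filter_prod_card' {α β : Type*} [Fintype α] [Fintype β]
    (p : α × β → Prop) [DecidablePred p] :
    (univ.filter p).card = ∑ a : α, (univ.filter (fun b => p (a, b))).card := by
  rw [Finset.card_filter, ← Finset.univ_product_univ, Finset.sum_product]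
  simp only [Finset.card_filter]

private lemma countFun' {m M : ℕ} (S : Finset (Fin m)) :
    (univ.filter (fun f : Fin m → Fin m × Fin M => ∀ i ∈ S, (f i).1 ∉ S)).card
      = ((m - S.card) * M) ^ S.card * (m * M) ^ (m - S.card) := by
  have h : (univ.filter (fun f : Fin m → Fin m × Fin M => ∀ i ∈ S, (f i).1 ∉ S))
      = Fintype.piFinset (fun i => if i ∈ S then (Sᶜ ×ˢ univ) else univ) := by
    ext f
    simp only [mem_filter, mem_univ, true_and, Fintype.mem_piFinset]
    constructor
    · intro hf i
      by_cases hi : i ∈ S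
      · simp [hi, Finset.mem_product, Finset.mem_compl, hf i hi]
      · simp [hi]
    · intro hf i hi
      have := hf i
      rw [if_pos hi, Finset.mem_product] at this
      simpa using this.1
  rw [h, Fintype.card_piFinset]
  have hcard : ∀ i : Fin m,
      ((if i ∈ S then (Sᶜ ×ˢ (univ : Finset (Fin M))) else univ).card)
        = if i ∈ S then (m - S.card) * M else m * M := by
    intro i
    by_cases hi : i ∈ S <;> simp [hi, Finset.card_compl]
  simp only [hcard]
  rw [Finset.prod_ite, Finset.prod_const, Finset.prod_const]
  have h1 : univ.filter (fun i : Fin m => i ∈ S) = S := by ext x; simp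
  have h2 : univ.filter (fun i : Fin m => i ∉ S) = Sᶜ := by ext x; simp
  rw [h1, h2, Finset.card_compl, Fintype.card_fin]

private lemma countFun2' {m M : ℕ} (S : Finset (Fin m)) (i' i : Fin m) (b : Fin M)
    (hi' : i' ∈ S) (hi : i ∉ S) :
    (univ.filter (fun f : Fin m → Fin m × Fin M =>
        (∀ j ∈ S, (f j).1 ∉ S) ∧ f i' = (i, b))).card
      = ((m - S.card) * M) ^ (S.card - 1) * (m * M) ^ (m - S.card) := by
  have h : (univ.filter (fun f : Fin m → Fin m × Fin M =>
        (∀ j ∈ S, (f j).1 ∉ S) ∧ f i' = (i, b)))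
      = Fintype.piFinset (fun j => if j = i' then {(i, b)}
          else if j ∈ S then (Sᶜ ×ˢ univ) else univ) := by
    ext f
    simp only [mem_filter, mem_univ, true_and, Fintype.mem_piFinset]
    constructor
    · rintro ⟨h1, h2⟩ j
      by_cases hj : j = i'
      · subst hj; simp [h2]
      · rw [if_neg hj]
        by_cases hjS : j ∈ S
        · simp [hjS, Finset.mem_product, Finset.mem_compl, h1 j hjS]
        · simp [hjS]
    · intro hf
      have hfi' : f i' = (i, b) := by have := hf i'; simpa using this
      refine ⟨fun j hj => ?_, hfi'⟩
      by_cases hji : j = i'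
      · subst hji; rw [hfi']; exact hi
      · have := hf j
        rw [if_neg hji, if_pos hj, Finset.mem_product] at this
        simpa using this.1
  rw [h, Fintype.card_piFinset]
  rw [← Finset.mul_prod_erase _ _ (Finset.mem_univ i'), if_pos rfl,
    Finset.card_singleton, one_mul]
  have hrw : ∀ j ∈ univ.erase i',
      ((if j = i' then ({(i, b)} : Finset (Fin m × Fin M))
          else if j ∈ S then Sᶜ ×ˢ univ else univ).card)
        = if j ∈ S then (m - S.card) * M else m * M := by
    intro j hj
    rw [if_neg (Finset.ne_of_mem_erase hj)]
    by_cases hjS : j ∈ S <;> simp [hjS, Finset.card_compl]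
  rw [Finset.prod_congr rfl hrw, Finset.prod_ite, Finset.prod_const, Finset.prod_const]
  have h1 : (univ.erase i').filter (fun j => j ∈ S) = S.erase i' := by
    ext x; simp [and_comm]
  have h2 : (univ.erase i').filter (fun j => j ∉ S) = Sᶜ := by
    ext x
    simp only [mem_filter, mem_erase, mem_univ, and_true, true_and, mem_compl]
    exact ⟨fun h => h.2, fun h => ⟨fun e => h (e ▸ hi'), h⟩⟩
  rw [h1, h2, Finset.card_erase_of_mem hi', Finset.card_compl, Fintype.card_fin]

private lemma card_subsets' (m k : ℕ) :
    (univ.filter (fun S : Finset (Fin m) => S.card = k)).card = m.choose k := by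
  have h : univ.filter (fun S : Finset (Fin m) => S.card = k)
      = Finset.powersetCard k univ := by
    ext S; simp [Finset.mem_powersetCard]
  rw [h, Finset.card_powersetCard, Finset.card_univ, Fintype.card_fin]

private lemma card_subsets_mem' (m k : ℕ) (hk : 1 ≤ k) (i : Fin m) :
    (univ.filter (fun S : Finset (Fin m) => S.card = k ∧ i ∈ S)).card
      = (m - 1).choose (k - 1) := by
  have hcard : ((univ.erase i).powersetCard (k - 1)).card = (m - 1).choose (k - 1) := by
    rw [Finset.card_powersetCard, Finset.card_erase_of_mem (Finset.mem_univ i),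
      Finset.card_univ, Fintype.card_fin]
  rw [← hcard]
  apply Finset.card_nbij' (fun S => S.erase i) (fun T => insert i T)
  · intro S hS
    simp only [mem_coe, mem_filter, mem_univ, true_and] at hS
    rw [Finset.mem_coe, Finset.mem_powersetCard]
    exact ⟨Finset.erase_subset_erase i (Finset.subset_univ S),
      by rw [Finset.card_erase_of_mem hS.2, hS.1]⟩
  · intro T hT
    rw [Finset.mem_coe, Finset.mem_powersetCard] at hT
    have hiT : i ∉ T := fun h => (Finset.mem_erase.1 (hT.1 h)).1 rfl
    simp only [mem_coe, mem_filter, mem_univ, true_and]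
    refine ⟨?_, Finset.mem_insert_self i T⟩
    rw [Finset.card_insert_of_notMem hiT, hT.2]; omega
  · intro S hS
    simp only [mem_coe, mem_filter, mem_univ, true_and] at hS
    exact Finset.insert_erase hS.2
  · intro T hT
    rw [Finset.mem_coe, Finset.mem_powersetCard] at hT
    exact Finset.erase_insert (fun h => (Finset.mem_erase.1 (hT.1 h)).1 rfl)

private lemma card_subsets_mem2' (m k : ℕ) (hk : 1 ≤ k) (i' i : Fin m) (hne : i' ≠ i) :
    (univ.filter (fun S : Finset (Fin m) => S.card = k ∧ i' ∈ S ∧ i ∉ S)).card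
      = (m - 2).choose (k - 1) := by
  have hcard : (((univ.erase i).erase i').powersetCard (k - 1)).card
      = (m - 2).choose (k - 1) := by
    rw [Finset.card_powersetCard, Finset.card_erase_of_mem
      (Finset.mem_erase.2 ⟨hne, Finset.mem_univ i'⟩),
      Finset.card_erase_of_mem (Finset.mem_univ i), Finset.card_univ, Fintype.card_fin]
    congr 1
  rw [← hcard]
  apply Finset.card_nbij' (fun S => S.erase i') (fun T => insert i' T)
  · intro S hS
    simp only [mem_coe, mem_filter, mem_univ, true_and] at hS
    rw [Finset.mem_coe, Finset.mem_powersetCard]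
    constructor
    · intro x hx
      rw [Finset.mem_erase] at hx ⊢
      refine ⟨hx.1, Finset.mem_erase.2 ⟨fun e => hS.2.2 (e ▸ hx.2), Finset.mem_univ x⟩⟩
    · rw [Finset.card_erase_of_mem hS.2.1, hS.1]
  · intro T hT
    rw [Finset.mem_coe, Finset.mem_powersetCard] at hT
    have hiT : i' ∉ T := fun h => (Finset.mem_erase.1 (hT.1 h)).1 rfl
    simp only [mem_coe, mem_filter, mem_univ, true_and]
    refine ⟨?_, Finset.mem_insert_self i' T, ?_⟩
    · rw [Finset.card_insert_of_notMem hiT, hT.2]; omega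
    · intro h
      rcases Finset.mem_insert.1 h with h | h
      · exact hne h.symm
      · exact (Finset.mem_erase.1 (Finset.mem_erase.1 (hT.1 h)).2).1 rfl
  · intro S hS
    simp only [mem_coe, mem_filter, mem_univ, true_and] at hS
    exact Finset.insert_erase hS.2.1
  · intro T hT
    rw [Finset.mem_coe, Finset.mem_powersetCard] at hT
    exact Finset.erase_insert (fun h => (Finset.mem_erase.1 (hT.1 h)).1 rfl)

private lemma choose_id1' {m k : ℕ} (hk : 1 ≤ k) (hkm : k ≤ m) :
    m * (m - 1).choose (k - 1) = k * m.choose k := by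
  obtain ⟨k', rfl⟩ : ∃ k', k = k' + 1 := ⟨k - 1, by omega⟩
  obtain ⟨m', rfl⟩ : ∃ m', m = m' + 1 := ⟨m - 1, by omega⟩
  simp only [Nat.add_sub_cancel]
  rw [Nat.add_one_mul_choose_eq]
  exact Nat.mul_comm _ _

private lemma choose_id2' {m k : ℕ} (hk : 1 ≤ k) (hkm : k + 1 ≤ m) :
    m * (m - 1) * (m - 2).choose (k - 1) = k * ((m - k) * m.choose k) := by
  have h1 : (m - 1) * (m - 2).choose (k - 1) = k * (m - 1).choose k := by
    have h := choose_id1' (m := m - 1) hk (by omega)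
    rwa [show m - 1 - 1 = m - 2 by omega] at h
  have hpascal : m.choose k = (m - 1).choose k + (m - 1).choose (k - 1) := by
    obtain ⟨k', rfl⟩ : ∃ k', k = k' + 1 := ⟨k - 1, by omega⟩
    obtain ⟨m', rfl⟩ : ∃ m', m = m' + 1 := ⟨m - 1, by omega⟩
    simp only [Nat.add_sub_cancel]
    rw [Nat.choose_succ_succ' m' k']; exact Nat.add_comm _ _
  have h2 : m * (m - 1).choose k + k * m.choose k = m * m.choose k := by
    calc m * (m - 1).choose k + k * m.choose k
        = m * (m - 1).choose k + m * (m - 1).choose (k - 1) := by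
          rw [choose_id1' hk (by omega)]
      _ = m * ((m - 1).choose k + (m - 1).choose (k - 1)) := by ring
      _ = m * m.choose k := by rw [← hpascal]
  have h3 : (m - k) * m.choose k + k * m.choose k = m * m.choose k := by
    rw [← Nat.add_mul, Nat.sub_add_cancel (by omega)]
  have h4 : m * (m - 1).choose k = (m - k) * m.choose k := by
    have e1 := Nat.eq_sub_of_add_eq h2
    have e2 := Nat.eq_sub_of_add_eq h3
    omega
  calc m * (m - 1) * (m - 2).choose (k - 1)
      = m * ((m - 1) * (m - 2).choose (k - 1)) := by ring
    _ = m * (k * (m - 1).choose k) := by rw [h1]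
    _ = k * (m * (m - 1).choose k) := by ring
    _ = k * ((m - k) * m.choose k) := by rw [h4]




/-- Round B (Lemma `roundB`): with measure `ξ` spread uniformly over all admissible
type-B classes (a set `S` of `n - c` of the first `n - 1` facilities, each taking all
its `B - 1` exclusive clients plus one exclusive client of a facility outside `S`;
neither far facility is contained): each exclusive client of facility `i ≤ n-1` is
assigned to `i` with fraction `ξ (n-c)/(n-1)` and to each other facility `i' ≤ n-1`
with fraction `ξ (n-c)/((n-1)(n-2)(n²-1))`. -/
theorem roundB_fractions (n c : ℕ) (hc : 2 ≤ c) (hcn : c + 2 ≤ n) (ξ : ℝ) (hξ : 0 < ξ) :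
    let B := n ^ 2
    let ClassB := Finset (Fin (n - 1)) × (Fin (n - 1) → Fin (n - 1) × Fin (B - 1))
    let ℬ : Finset ClassB := Finset.univ.filter (fun cl =>
      cl.1.card = n - c ∧ ∀ i ∈ cl.1, (cl.2 i).1 ∉ cl.1)
    (∀ i : Fin (n - 1), ∀ _b : Fin (B - 1),
      ξ * ((ℬ.filter (fun cl => i ∈ cl.1)).card : ℝ) / ℬ.card =
        ξ * ((n : ℝ) - c) / ((n : ℝ) - 1)) ∧
    (∀ i i' : Fin (n - 1), ∀ b : Fin (B - 1), i ≠ i' →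
      ξ * ((ℬ.filter (fun cl => i' ∈ cl.1 ∧ cl.2 i' = (i, b))).card : ℝ) / ℬ.card =
        ξ * ((n : ℝ) - c) /
          (((n : ℝ) - 1) * ((n : ℝ) - 2) * ((n : ℝ) ^ 2 - 1))) := by
  intro B ClassB ℬ
  have hM2 : 2 ≤ n ^ 2 := le_trans (by omega) (Nat.le_self_pow (by norm_num) n)
  have hM1 : 1 ≤ n ^ 2 - 1 := Nat.le_sub_of_add_le hM2
  -- abbreviations (as plain terms)
  set A : ℕ := ((n - 1) - (n - c)) * (n ^ 2 - 1) with hA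
  set Bb : ℕ := (n - 1) * (n ^ 2 - 1) with hBb
  set N : ℕ := A ^ (n - c) * Bb ^ ((n - 1) - (n - c)) with hN
  set N2 : ℕ := A ^ ((n - c) - 1) * Bb ^ ((n - 1) - (n - c)) with hN2
  have hApos : 0 < A := by
    apply Nat.mul_pos _ hM1
    omega
  have hBbpos : 0 < Bb := by
    apply Nat.mul_pos _ hM1
    omega
  have hNpos : 0 < N := Nat.mul_pos (pow_pos hApos _) (pow_pos hBbpos _)
  have hN2pos : 0 < N2 := Nat.mul_pos (pow_pos hApos _) (pow_pos hBbpos _)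
  have hNsplit : N = A * N2 := by
    have hpow : A ^ (n - c) = A * A ^ ((n - c) - 1) := by
      conv_lhs => rw [show n - c = ((n - c) - 1) + 1 from by omega]
      rw [pow_succ]; ring
    rw [hN, hN2, hpow]; ring
  -- cardinality of ℬ
  have hBcard : ℬ.card = (n - 1).choose (n - c) * N := by
    show (Finset.univ.filter
      (fun cl : Finset (Fin (n - 1)) × (Fin (n - 1) → Fin (n - 1) × Fin (n ^ 2 - 1)) =>
        cl.1.card = n - c ∧ ∀ i ∈ cl.1, (cl.2 i).1 ∉ cl.1)).card = _
    rw [filter_prod_card']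
    have hinner : ∀ S : Finset (Fin (n - 1)),
        (Finset.univ.filter (fun f : Fin (n - 1) → Fin (n - 1) × Fin (n ^ 2 - 1) =>
          S.card = n - c ∧ ∀ i ∈ S, (f i).1 ∉ S)).card
        = if S.card = n - c then N else 0 := by
      intro S
      by_cases hS : S.card = n - c
      · rw [if_pos hS]
        have he : (Finset.univ.filter (fun f : Fin (n - 1) → Fin (n - 1) × Fin (n ^ 2 - 1) =>
            S.card = n - c ∧ ∀ i ∈ S, (f i).1 ∉ S))
            = Finset.univ.filter (fun f => ∀ i ∈ S, (f i).1 ∉ S) := by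
          apply Finset.filter_congr
          intro f _
          simp [hS]
        rw [he, countFun', hS]
      · rw [if_neg hS, Finset.card_eq_zero]
        exact Finset.filter_false_of_mem (fun f _ hf => hS hf.1)
    simp only [hinner]
    rw [← Finset.sum_filter, Finset.sum_const, smul_eq_mul, card_subsets']
  have hchpos : 0 < (n - 1).choose (n - c) := Nat.choose_pos (by omega)
  -- casts
  have hcast1 : ((n - c : ℕ) : ℝ) = (n : ℝ) - c := by
    rw [Nat.cast_sub (by omega)]
  have hcast2 : ((n - 1 : ℕ) : ℝ) = (n : ℝ) - 1 := by
    rw [Nat.cast_sub (by omega)]; norm_num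
  have hcast3 : ((n - 1 - 1 : ℕ) : ℝ) = (n : ℝ) - 2 := by
    rw [show n - 1 - 1 = n - 2 by omega, Nat.cast_sub (by omega)]; norm_num
  have hcast4 : (((n - 1) - (n - c) : ℕ) : ℝ) = (c : ℝ) - 1 := by
    rw [show (n - 1) - (n - c) = c - 1 by omega, Nat.cast_sub (by omega)]; norm_num
  have hcast5 : ((n ^ 2 - 1 : ℕ) : ℝ) = (n : ℝ) ^ 2 - 1 := by
    rw [Nat.cast_sub (by omega)]; push_cast; ring
  have hNR : (0 : ℝ) < (N : ℝ) := by exact_mod_cast hNpos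
  have hN2R : (0 : ℝ) < (N2 : ℝ) := by exact_mod_cast hN2pos
  have hC0R : (0 : ℝ) < ((n - 1).choose (n - c) : ℝ) := by exact_mod_cast hchpos
  have hn1R : (0 : ℝ) < (n : ℝ) - 1 := by
    have : (4 : ℝ) ≤ (n : ℝ) := by exact_mod_cast (show 4 ≤ n by omega)
    linarith
  have hn2R : (0 : ℝ) < (n : ℝ) - 2 := by
    have : (4 : ℝ) ≤ (n : ℝ) := by exact_mod_cast (show 4 ≤ n by omega)
    linarith
  have hcR : (0 : ℝ) < (c : ℝ) - 1 := by
    have : (2 : ℝ) ≤ (c : ℝ) := by exact_mod_cast hc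
    linarith
  have hMR : (0 : ℝ) < (n : ℝ) ^ 2 - 1 := by
    rw [← hcast5]; exact_mod_cast hM1
  -- choose identities in ℝ
  have idA : ((n : ℝ) - 1) * ((n - 1 - 1).choose ((n - c) - 1) : ℝ)
      = ((n : ℝ) - c) * ((n - 1).choose (n - c) : ℝ) := by
    have h := choose_id1' (m := n - 1) (k := n - c) (by omega) (by omega)
    have h' := congrArg (Nat.cast : ℕ → ℝ) h
    rw [Nat.cast_mul, Nat.cast_mul, hcast2, hcast1] at h'
    exact h'
  constructor
  · intro i _b
    have hnum1 : (ℬ.filter (fun cl => i ∈ cl.1)).card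
        = (n - 1 - 1).choose ((n - c) - 1) * N := by
      show ((Finset.univ.filter
        (fun cl : Finset (Fin (n - 1)) × (Fin (n - 1) → Fin (n - 1) × Fin (n ^ 2 - 1)) =>
          cl.1.card = n - c ∧ ∀ j ∈ cl.1, (cl.2 j).1 ∉ cl.1)).filter
          (fun cl => i ∈ cl.1)).card = _
      rw [Finset.filter_filter, filter_prod_card']
      have hinner : ∀ S : Finset (Fin (n - 1)),
          (Finset.univ.filter (fun f : Fin (n - 1) → Fin (n - 1) × Fin (n ^ 2 - 1) =>
            (S.card = n - c ∧ ∀ j ∈ S, (f j).1 ∉ S) ∧ i ∈ S)).card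
          = if S.card = n - c ∧ i ∈ S then N else 0 := by
        intro S
        by_cases hS : S.card = n - c ∧ i ∈ S
        · rw [if_pos hS]
          have he : (Finset.univ.filter
              (fun f : Fin (n - 1) → Fin (n - 1) × Fin (n ^ 2 - 1) =>
                (S.card = n - c ∧ ∀ j ∈ S, (f j).1 ∉ S) ∧ i ∈ S))
              = Finset.univ.filter (fun f => ∀ j ∈ S, (f j).1 ∉ S) := by
            apply Finset.filter_congr
            intro f _
            simp [hS.1, hS.2]
          rw [he, countFun', hS.1]
        · rw [if_neg hS, Finset.card_eq_zero]
          exact Finset.filter_false_of_mem (fun f _ hf => hS ⟨hf.1.1, hf.2⟩)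
      simp only [hinner]
      rw [← Finset.sum_filter, Finset.sum_const, smul_eq_mul,
        card_subsets_mem' _ _ (by omega) i]
    rw [hnum1, hBcard]
    push_cast
    field_simp
    linear_combination idA
  · intro i i' b hne
    have idB : ((n : ℝ) - 1) * ((n : ℝ) - 2) * ((n - 1 - 2).choose ((n - c) - 1) : ℝ)
        = ((n : ℝ) - c) * (((c : ℝ) - 1) * ((n - 1).choose (n - c) : ℝ)) := by
      have h := choose_id2' (m := n - 1) (k := n - c) (by omega) (by omega)
      have h' := congrArg (Nat.cast : ℕ → ℝ) h
      rw [Nat.cast_mul, Nat.cast_mul, Nat.cast_mul, Nat.cast_mul,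
        hcast2, hcast3, hcast1, hcast4] at h'
      exact h'
    have hnum2 : (ℬ.filter (fun cl => i' ∈ cl.1 ∧ cl.2 i' = (i, b))).card
        = (n - 1 - 2).choose ((n - c) - 1) * N2 := by
      show ((Finset.univ.filter
        (fun cl : Finset (Fin (n - 1)) × (Fin (n - 1) → Fin (n - 1) × Fin (n ^ 2 - 1)) =>
          cl.1.card = n - c ∧ ∀ j ∈ cl.1, (cl.2 j).1 ∉ cl.1)).filter
          (fun cl => i' ∈ cl.1 ∧ cl.2 i' = (i, b))).card = _
      rw [Finset.filter_filter, filter_prod_card']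
      have hinner : ∀ S : Finset (Fin (n - 1)),
          (Finset.univ.filter (fun f : Fin (n - 1) → Fin (n - 1) × Fin (n ^ 2 - 1) =>
            (S.card = n - c ∧ ∀ j ∈ S, (f j).1 ∉ S) ∧ (i' ∈ S ∧ f i' = (i, b)))).card
          = if S.card = n - c ∧ i' ∈ S ∧ i ∉ S then N2 else 0 := by
        intro S
        by_cases hS : S.card = n - c ∧ i' ∈ S ∧ i ∉ S
        · rw [if_pos hS]
          have he : (Finset.univ.filter
              (fun f : Fin (n - 1) → Fin (n - 1) × Fin (n ^ 2 - 1) =>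
                (S.card = n - c ∧ ∀ j ∈ S, (f j).1 ∉ S) ∧ (i' ∈ S ∧ f i' = (i, b))))
              = Finset.univ.filter (fun f => (∀ j ∈ S, (f j).1 ∉ S) ∧ f i' = (i, b)) := by
            apply Finset.filter_congr
            intro f _
            simp [hS.1, hS.2.1]
          rw [he, countFun2' S i' i b hS.2.1 hS.2.2, hS.1]
        · rw [if_neg hS, Finset.card_eq_zero]
          apply Finset.filter_false_of_mem
          intro f _ hf
          have hiS : i ∉ S := by
            have h2 := hf.1.2 i' hf.2.1
            rw [hf.2.2] at h2
            exact h2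
          exact hS ⟨hf.1.1, hf.2.1, hiS⟩
      simp only [hinner]
      rw [← Finset.sum_filter, Finset.sum_const, smul_eq_mul,
        card_subsets_mem2' _ _ (by omega) i' i (Ne.symm hne)]
    rw [hnum2, hBcard, hNsplit, hA]
    push_cast
    rw [hcast4, hcast5]
    field_simp
    linear_combination idB
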